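/- arXiv:math/0309380 — 2 statements merged into one kernel-verified Lean document; each statement's English description precedes it below -/
import Mathlib

section
/- There is a bijection between the layered acyclic orientations of the lexicographic product G^k and the acyclic orientations of G, given by restricting a layered orientation to any single layer. -/
open SimpleGraph

open scoped Classical

noncomputable section

/-- An orientation of an undirected graph `G`: each edge receives exactly one
direction. -/
structure GraphOrientation {V : Type*} (G : SimpleGraph V) where
  dir : V → V → Prop
  dir_iff : ∀ u v, G.Adj u v ↔ (dir u v ∨ dir v u)
  not_both : ∀ u v, dir u v → ¬ dir v u

/-- An orientation is acyclic if it produces no directed cycle. -/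
def GraphOrientation.Acyclic {V : Type*} {G : SimpleGraph V}
    (ω : GraphOrientation G) : Prop :=
  ∀ v, ¬ Relation.TransGen ω.dir v v

/-- The number of nodes on a longest directed path of the relation `dir`. -/
def dirPathLen {V : Type*} (dir : V → V → Prop) : ℕ :=
  sSup {n | ∃ l : List V, l.Chain' dir ∧ l.length = n}

/-- The lexicographic product `G^k` of `G` with the complete graph on `k`
nodes: nodes `i^1, …, i^k` for each node `i` of `G`; all pairs `i^a, i^b`
(`a ≠ b`) are adjacent, and `i^a` is adjacent to `j^b` whenever `(i,j)` is an
edge of `G`. -/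
def lexProd {V : Type*} (G : SimpleGraph V) (k : ℕ) : SimpleGraph (V × Fin k) where
  Adj x y := G.Adj x.1 y.1 ∨ (x.1 = y.1 ∧ x.2 ≠ y.2)
  symm := ⟨fun x y h => by
    rcases h with h | ⟨h1, h2⟩
    · exact Or.inl h.symm
    · exact Or.inr ⟨h1.symm, h2.symm⟩⟩
  loopless := ⟨fun x h => by
    rcases h with h | ⟨h1, h2⟩
    · exact G.irrefl h
    · exact h2 rfl⟩

/-- A layered orientation of `G^k`: every edge between distinct layers points
from the higher layer to the lower one, and for each edge of `G` the `k`
within-layer copies receive the same orientation. -/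
def IsLayered {V : Type*} {G : SimpleGraph V} {k : ℕ}
    (φ : GraphOrientation (lexProd G k)) : Prop :=
  (∀ x y : V × Fin k, (lexProd G k).Adj x y → y.2 < x.2 → φ.dir x y) ∧
  (∀ i j : V, ∀ a b : Fin k, φ.dir (i, a) (j, a) → φ.dir (i, b) (j, b))

/-- A `k`-tuple coloring of `G`, recorded as the increasing list
`c v 0 < c v 1 < ⋯` of the `k` distinct colors of each node `v`; adjacent
nodes share no color. -/
def IsKTupleColoring {V : Type*} (G : SimpleGraph V) (k : ℕ)
    (c : V → Fin k → ℕ) : Prop :=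
  (∀ v, StrictMono (c v)) ∧ ∀ u v, G.Adj u v → ∀ a b, c u a ≠ c v b

/-- The colors of `u` and `v` strictly alternate, starting with `u`:
`c u 0 < c v 0 < c u 1 < c v 1 < ⋯ < c u (k-1) < c v (k-1)`. -/
def Alt {V : Type*} (k : ℕ) (c : V → Fin k → ℕ) (u v : V) : Prop :=
  (∀ a : Fin k, c u a < c v a) ∧
  ∀ (a : Fin k) (h : (a : ℕ) + 1 < k), c v a < c u ⟨(a : ℕ) + 1, h⟩

/-- An interleaved `k`-tuple coloring: on every edge the two `k`-tuples of
colors strictly alternate. -/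
def IsInterleavedColoring {V : Type*} (G : SimpleGraph V) (k : ℕ)
    (c : V → Fin k → ℕ) : Prop :=
  IsKTupleColoring G k c ∧ ∀ u v, G.Adj u v → Alt k c u v ∨ Alt k c v u

/-- The `k`-chromatic number `χ^k(G)`: the least number of colors in a
`k`-tuple coloring of `G`. -/
def chiK {V : Type*} (G : SimpleGraph V) (k : ℕ) : ℕ :=
  sInf {n | ∃ c : V → Fin k → ℕ, IsKTupleColoring G k c ∧ ∀ v a, c v a < n}

/-- The interleaved `k`-chromatic number `χ_int^k(G)`. -/
def chiIntK {V : Type*} (G : SimpleGraph V) (k : ℕ) : ℕ :=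
  sInf {n | ∃ c : V → Fin k → ℕ, IsInterleavedColoring G k c ∧ ∀ v a, c v a < n}

/-- The chromatic number of `G`: the least number of colors in a proper
(1-tuple) coloring. -/
def chromNat {V : Type*} (G : SimpleGraph V) : ℕ :=
  sInf {n | ∃ c : V → ℕ, (∀ u v, G.Adj u v → c u ≠ c v) ∧ ∀ v, c v < n}

/-- The multichromatic number `χ^*(G) = inf_{k ≥ 1} χ^k(G)/k`. -/
def chiStar {V : Type*} (G : SimpleGraph V) : ℝ :=
  ⨅ k : ℕ+, (chiK G k : ℝ) / ((k : ℕ) : ℝ)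

/-- The interleaved multichromatic number
`χ_int^*(G) = inf_{k ≥ 1} χ_int^k(G)/k`. -/
def chiIntStar {V : Type*} (G : SimpleGraph V) : ℝ :=
  ⨅ k : ℕ+, (chiIntK G k : ℝ) / ((k : ℕ) : ℝ)

/-- `m(κ⁺, ω)`: the number of edges of the closed walk `κ` oriented by `ω` in
the traversal direction of `κ`. -/
def mFwd {V : Type*} {G : SimpleGraph V} {v : V} (ω : GraphOrientation G)
    (κ : G.Walk v v) : ℕ :=
  (κ.darts.filter (fun d => decide (ω.dir d.toProd.1 d.toProd.2))).length

/-- `m(κ⁻, ω)`: the number of edges of the closed walk `κ` oriented by `ω`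
against the traversal direction of `κ`. -/
def mBwd {V : Type*} {G : SimpleGraph V} {v : V} (ω : GraphOrientation G)
    (κ : G.Walk v v) : ℕ :=
  (κ.darts.filter (fun d => decide (ω.dir d.toProd.2 d.toProd.1))).length

end

noncomputable section Aux6

theorem GraphOrientation.ext' {V : Type*} {G : SimpleGraph V}
    {ω₁ ω₂ : GraphOrientation G} (h : ω₁.dir = ω₂.dir) : ω₁ = ω₂ := by
  cases ω₁; cases ω₂; cases h; rfl

theorem GraphOrientation.adj_of_dir {V : Type*} {G : SimpleGraph V}
    (ω : GraphOrientation G) {u v : V} (h : ω.dir u v) : G.Adj u v :=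
  (ω.dir_iff u v).mpr (Or.inl h)

/-- Restriction of an orientation of `G^k` to the bottom layer. -/
def restrictO {V : Type*} {G : SimpleGraph V} {k : ℕ} (hk : 1 ≤ k)
    (φ : GraphOrientation (lexProd G k)) : GraphOrientation G where
  dir i j := φ.dir (i, ⟨0, hk⟩) (j, ⟨0, hk⟩)
  dir_iff i j := by
    have h := φ.dir_iff (i, ⟨0, hk⟩) (j, ⟨0, hk⟩)
    simpa [lexProd] using h
  not_both i j h := φ.not_both _ _ h

/-- Lifting an orientation of `G` to a layered orientation of `G^k`. -/
def liftO {V : Type*} {G : SimpleGraph V} (k : ℕ) (ω : GraphOrientation G) :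
    GraphOrientation (lexProd G k) where
  dir x y := (y.2 < x.2 ∧ (lexProd G k).Adj x y) ∨ (x.2 = y.2 ∧ ω.dir x.1 y.1)
  dir_iff x y := by
    constructor
    · intro hadj
      rcases lt_trichotomy x.2 y.2 with hlt | heq | hgt
      · exact Or.inr (Or.inl ⟨hlt, hadj.symm⟩)
      · have hG : G.Adj x.1 y.1 := by
          rcases hadj with h | ⟨_, hne⟩
          · exact h
          · exact absurd heq hne
        rcases (ω.dir_iff x.1 y.1).mp hG with h | h
        · exact Or.inl (Or.inr ⟨heq, h⟩)
        · exact Or.inr (Or.inr ⟨heq.symm, h⟩)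
      · exact Or.inl (Or.inl ⟨hgt, hadj⟩)
    · rintro ((⟨_, h⟩ | ⟨_, h⟩) | (⟨_, h⟩ | ⟨_, h⟩))
      · exact h
      · exact Or.inl (ω.adj_of_dir h)
      · exact h.symm
      · exact Or.inl (ω.adj_of_dir h).symm
  not_both x y h h' := by
    rcases h with ⟨h1, _⟩ | ⟨h1, h2⟩ <;> rcases h' with ⟨h1', _⟩ | ⟨h1', h2'⟩
    · exact absurd h1' (lt_asymm h1)
    · exact absurd h1' (ne_of_lt h1)
    · exact absurd h1 (ne_of_lt h1')
    · exact ω.not_both _ _ h2 h2'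

theorem liftO_layered {V : Type*} {G : SimpleGraph V} (k : ℕ)
    (ω : GraphOrientation G) : IsLayered (liftO k ω) := by
  constructor
  · intro x y hadj hlt
    exact Or.inl ⟨hlt, hadj⟩
  · intro i j a b h
    rcases h with ⟨h1, _⟩ | ⟨_, h2⟩
    · exact absurd h1 (lt_irrefl _)
    · exact Or.inr ⟨rfl, h2⟩

theorem liftO_acyclic {V : Type*} {G : SimpleGraph V} (k : ℕ)
    {ω : GraphOrientation G} (hω : ω.Acyclic) : (liftO k ω).Acyclic := by
  intro x hx
  set t : V × Fin k → V × Fin k → Prop :=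
    fun x y => y.2 < x.2 ∨ (x.2 = y.2 ∧ Relation.TransGen ω.dir x.1 y.1) with ht
  have htrans : Transitive t := by
    rintro a b c (h1 | ⟨h1, h1'⟩) (h2 | ⟨h2, h2'⟩)
    · exact Or.inl (h2.trans h1)
    · exact Or.inl (h2 ▸ h1)
    · exact Or.inl (h1 ▸ h2)
    · exact Or.inr ⟨h1.trans h2, h1'.trans h2'⟩
  have hsub : ∀ a b, (liftO k ω).dir a b → t a b := by
    rintro a b (⟨h1, _⟩ | ⟨h1, h2⟩)
    · exact Or.inl h1
    · exact Or.inr ⟨h1, Relation.TransGen.single h2⟩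
  have hx' : Relation.TransGen t x x := Relation.TransGen.mono hsub _ _ hx
  rw [@Relation.transGen_eq_self _ t ⟨fun a b c h1 h2 => htrans h1 h2⟩] at hx'
  rcases hx' with h | ⟨_, h⟩
  · exact lt_irrefl _ h
  · exact hω _ h

theorem restrictO_acyclic {V : Type*} {G : SimpleGraph V} {k : ℕ} (hk : 1 ≤ k)
    {φ : GraphOrientation (lexProd G k)} (hφ : φ.Acyclic) :
    (restrictO hk φ).Acyclic := by
  intro i hi
  exact hφ (i, ⟨0, hk⟩)
    (Relation.TransGen.lift (fun v => (v, (⟨0, hk⟩ : Fin k)))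
      (fun a b h => h) _ _ hi)

theorem liftO_restrictO {V : Type*} {G : SimpleGraph V} {k : ℕ} (hk : 1 ≤ k)
    {φ : GraphOrientation (lexProd G k)} (hL : IsLayered φ) :
    liftO k (restrictO hk φ) = φ := by
  apply GraphOrientation.ext'
  funext x y
  obtain ⟨i, a⟩ := x
  obtain ⟨j, b⟩ := y
  apply propext
  constructor
  · rintro (⟨h1, h2⟩ | ⟨h1, h2⟩)
    · exact hL.1 _ _ h2 h1
    · have := hL.2 i j ⟨0, hk⟩ a h2
      cases h1
      exact this
  · intro h
    rcases lt_trichotomy (a : Fin k) b with hlt | heq | hgt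
    · exfalso
      have hadj : (lexProd G k).Adj (j, b) (i, a) := (φ.adj_of_dir h).symm
      exact φ.not_both _ _ h (hL.1 _ _ hadj hlt)
    · cases heq
      exact Or.inr ⟨rfl, hL.2 i j a ⟨0, hk⟩ h⟩
    · exact Or.inl ⟨hgt, φ.adj_of_dir h⟩

theorem restrictO_liftO {V : Type*} {G : SimpleGraph V} {k : ℕ} (hk : 1 ≤ k)
    (ω : GraphOrientation G) : restrictO hk (liftO k ω) = ω := by
  apply GraphOrientation.ext'
  funext i j
  apply propext
  simp [restrictO, liftO]

end Aux6

/-- There is a bijection between the layered acyclic orientations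
of the lexicographic product `G^k` and the acyclic orientations of `G`, given
by restricting a layered orientation to any single layer. -/
theorem stmt6 {V : Type*} [Fintype V] (G : SimpleGraph V)
    (hE : G.edgeSet.Nonempty) (k : ℕ) (hk : 1 ≤ k) :
    ∃ F : {φ : GraphOrientation (lexProd G k) // IsLayered φ ∧ φ.Acyclic} ≃
          {ω : GraphOrientation G // ω.Acyclic},
      ∀ (φ : {φ : GraphOrientation (lexProd G k) // IsLayered φ ∧ φ.Acyclic})
        (i j : V) (a : Fin k), (F φ).1.dir i j ↔ φ.1.dir (i, a) (j, a) := by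
  refine ⟨{
    toFun := fun φ => ⟨restrictO hk φ.1, restrictO_acyclic hk φ.2.2⟩
    invFun := fun ω => ⟨liftO k ω.1, liftO_layered k ω.1, liftO_acyclic k ω.2⟩
    left_inv := fun φ => Subtype.ext (liftO_restrictO hk φ.2.1)
    right_inv := fun ω => Subtype.ext (restrictO_liftO hk ω.1) }, ?_⟩
  intro φ i j a
  constructor
  · intro h
    exact φ.2.1.2 i j ⟨0, hk⟩ a h
  · intro h
    exact φ.2.1.2 i j a ⟨0, hk⟩ h
end

section
/- For any acyclic orientation ω of a graph G with at least one cycle, any simple cycle κ of G, and any k ≥ 1, the interleaved k-chromatic number satisfies χ_int^k(G)/k ≥ |κ| / min{m(κ+,ω_κ), m(κ-,ω_κ)} for the orientation ω_κ realizing the minimum; more precisely, for every layered acyclic orientation φ_ω^k of G^k corresponding to ω, the longest directed path length l satisfies l/k ≥ |κ| / min{m(κ+,ω), m(κ-,ω)}. -/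
open SimpleGraph

open scoped Classical

section Aux
variable {V : Type*}

lemma sum_map_ite {α : Type*} (P Q : α → Prop) (A B : ℤ) :
    ∀ (l : List α), (∀ d ∈ l, (Q d ↔ ¬ P d)) →
      (l.map (fun d => if P d then A else B)).sum
        = A * ((l.filter (fun d => decide (P d))).length : ℤ)
          + B * ((l.filter (fun d => decide (Q d))).length : ℤ) := by
  intro l
  induction l with
  | nil => simp
  | cons x xs ih =>
    intro h
    have hx := h x (by simp)
    have ih' := ih (fun d hd => h d (by simp [hd]))
    by_cases hp : P x
    · have hq : ¬ Q x := by tauto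
      simp [List.filter_cons, hp, hq, ih']
      ring
    · have hq : Q x := hx.mpr hp
      simp [List.filter_cons, hp, hq, ih']
      ring

lemma walk_tele {G : SimpleGraph V} (Φ : V → ℤ) (g : G.Dart → ℤ)
    (hg : ∀ d : G.Dart, Φ d.toProd.1 + g d ≤ Φ d.toProd.2) :
    ∀ {a b : V} (p : G.Walk a b), Φ a + (p.darts.map g).sum ≤ Φ b := by
  intro a b p
  induction p with
  | nil => simp
  | cons h q ih =>
    rename_i u x w
    have := hg ⟨(u, x), h⟩
    simp only [Walk.darts_cons, List.map_cons, List.sum_cons] at *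
    linarith

lemma core_ineq {G : SimpleGraph V} {v : V} (ω : GraphOrientation G) (κ : G.Walk v v)
    {k : ℕ} (hk : 1 ≤ k) (val : V → Fin k → ℕ) (X : ℕ)
    (hlt : ∀ u a, val u a < X)
    (hF : ∀ u w, G.Adj u w → ω.dir u w → ∀ a : Fin k, val u a + 1 ≤ val w a)
    (hB : ∀ u w, G.Adj u w → ω.dir w u → ∀ (a : ℕ) (h : a + 1 < k),
        val u ⟨a, by omega⟩ + 1 ≤ val w ⟨a + 1, h⟩) :
    k * κ.length ≤ X * mBwd ω κ := by
  obtain ⟨m, rfl⟩ : ∃ m, k = m + 1 := ⟨k - 1, by omega⟩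
  set val' : V → ℕ → ℤ := fun u i => if h : i < m + 1 then (val u ⟨i, h⟩ : ℤ) else 0 with hval'
  set Φ : V → ℤ := fun u => ∑ i ∈ Finset.range (m + 1), val' u i with hΦ
  set g : G.Dart → ℤ := fun d =>
    if ω.dir d.toProd.1 d.toProd.2 then ((m : ℤ) + 1) else ((m : ℤ) + 1) - X with hg
  have hval'lt : ∀ u i, i < m + 1 → val' u i < X := by
    intro u i hi
    simp only [hval', dif_pos hi]
    exact_mod_cast hlt u ⟨i, hi⟩
  have hval'nonneg : ∀ u i, 0 ≤ val' u i := by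
    intro u i
    simp only [hval']
    split <;> positivity
  have hgd : ∀ d : G.Dart, Φ d.toProd.1 + g d ≤ Φ d.toProd.2 := by
    intro d
    obtain ⟨⟨u, w⟩, hadj⟩ := d
    simp only [hg]
    by_cases hd : ω.dir u w
    · rw [if_pos hd]
      have step : ∀ i ∈ Finset.range (m + 1), val' u i + 1 ≤ val' w i := by
        intro i hi
        rw [Finset.mem_range] at hi
        simp only [hval', dif_pos hi]
        exact_mod_cast hF u w hadj hd ⟨i, hi⟩
      have := Finset.sum_le_sum step
      simp only [Finset.sum_add_distrib, Finset.sum_const, Finset.card_range,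
        nsmul_eq_mul, mul_one] at this
      simp only [hΦ]
      push_cast at this ⊢
      linarith
    · have hd' : ω.dir w u := by
        rcases (ω.dir_iff u w).mp hadj with h | h
        · exact absurd h hd
        · exact h
      rw [if_neg hd]
      have step : ∀ i ∈ Finset.range m, val' u i + 1 ≤ val' w (i + 1) := by
        intro i hi
        rw [Finset.mem_range] at hi
        have h1 : i + 1 < m + 1 := by omega
        have h0 : i < m + 1 := by omega
        simp only [hval', dif_pos h1, dif_pos h0]
        exact_mod_cast hB u w hadj hd' i h1
      have hsum := Finset.sum_le_sum step
      simp only [Finset.sum_add_distrib, Finset.sum_const, Finset.card_range,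
        nsmul_eq_mul, mul_one] at hsum
      have e1 : Φ w = (∑ i ∈ Finset.range m, val' w (i + 1)) + val' w 0 :=
        Finset.sum_range_succ' _ m
      have e2 : Φ u = (∑ i ∈ Finset.range m, val' u i) + val' u m :=
        Finset.sum_range_succ _ m
      have h3 := hval'lt u m (by omega)
      have h4 := hval'nonneg w 0
      have hX : 1 ≤ (X : ℤ) := by
        have := hlt u ⟨0, by omega⟩; omega
      rw [e1, e2]
      push_cast
      linarith
  have tele := walk_tele Φ g hgd κ
  have hdartsQP : ∀ d ∈ κ.darts, (ω.dir d.toProd.2 d.toProd.1 ↔ ¬ ω.dir d.toProd.1 d.toProd.2) := by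
    intro d _
    constructor
    · intro h h'
      exact ω.not_both _ _ h' h
    · intro h
      rcases (ω.dir_iff d.toProd.1 d.toProd.2).mp d.adj with h' | h'
      · exact absurd h' h
      · exact h'
  have hsum := sum_map_ite (fun d : G.Dart => ω.dir d.toProd.1 d.toProd.2)
      (fun d => ω.dir d.toProd.2 d.toProd.1) ((m : ℤ) + 1) ((m : ℤ) + 1 - X) κ.darts hdartsQP
  have hlen : ∀ (l : List G.Dart),
      (∀ d ∈ l, (ω.dir d.toProd.2 d.toProd.1 ↔ ¬ ω.dir d.toProd.1 d.toProd.2)) →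
      (l.filter (fun d => decide (ω.dir d.toProd.1 d.toProd.2))).length
      + (l.filter (fun d => decide (ω.dir d.toProd.2 d.toProd.1))).length
      = l.length := by
    intro l
    induction l with
    | nil => simp
    | cons d t ih =>
      intro h
      have hd := h d (by simp)
      have ih' := ih (fun d hd => h d (by simp [hd]))
      by_cases hp : ω.dir d.toProd.1 d.toProd.2
      · have hq : ¬ ω.dir d.toProd.2 d.toProd.1 := by tauto
        simp [List.filter_cons, hp, hq, ih']
        omega
      · have hq : ω.dir d.toProd.2 d.toProd.1 := hd.mpr hp
        simp [List.filter_cons, hp, hq, ih']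
        omega
  have hlen' := hlen κ.darts hdartsQP
  rw [κ.length_darts] at hlen'
  rw [hsum] at tele
  show (m + 1) * κ.length ≤ X * mBwd ω κ
  have hfin : ((m : ℤ) + 1) * (mFwd ω κ : ℤ) + ((m : ℤ) + 1 - X) * (mBwd ω κ : ℤ) ≤ 0 := by
    have : mFwd ω κ = (κ.darts.filter (fun d => decide (ω.dir d.toProd.1 d.toProd.2))).length := rfl
    have : mBwd ω κ = (κ.darts.filter (fun d => decide (ω.dir d.toProd.2 d.toProd.1))).length := rfl
    simp only [mFwd, mBwd]
    linarith [tele]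
  have hL : (mFwd ω κ : ℤ) + (mBwd ω κ : ℤ) = (κ.length : ℤ) := by
    simp only [mFwd, mBwd]
    exact_mod_cast hlen'
  have final : ((m : ℤ) + 1) * (κ.length : ℤ) ≤ (X : ℤ) * (mBwd ω κ : ℤ) := by nlinarith [hfin, hL]
  exact_mod_cast final

end Aux
section Aux2
variable {V : Type*}

lemma mBwd_reverse {G : SimpleGraph V} {v : V} (ω : GraphOrientation G) (κ : G.Walk v v) :
    mBwd ω κ.reverse = mFwd ω κ := by
  simp only [mBwd, mFwd, Walk.darts_reverse, List.filter_reverse, List.length_reverse,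
    List.filter_map, List.length_map]
  congr 1

lemma chain_transGen {α : Type*} {r : α → α → Prop} :
    ∀ (l : List α) (x : α), List.Chain r x l → ∀ y ∈ l, Relation.TransGen r x y := by
  intro l
  induction l with
  | nil => simp
  | cons b t ih =>
    intro x hc y hy
    have hc : r x b ∧ List.Chain r b t := List.isChain_cons_cons.mp hc
    rcases List.mem_cons.mp hy with rfl | hy
    · exact Relation.TransGen.single hc.1
    · exact (ih b hc.2 y hy).head hc.1

lemma chain'_nodup {α : Type*} {r : α → α → Prop} (hr : ∀ v, ¬ Relation.TransGen r v v) :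
    ∀ (l : List α), l.Chain' r → l.Nodup := by
  intro l
  induction l with
  | nil => simp
  | cons x t ih =>
    intro hc
    have hct : List.Chain r x t := hc
    exact List.nodup_cons.mpr
      ⟨fun hx => hr x (chain_transGen t x hct x hx), ih hc.tail⟩

/-- The set of lengths of `r`-chains ending at `x`. -/
def endSet {α : Type*} (r : α → α → Prop) (x : α) : Set ℕ :=
  {n | ∃ l : List α, l.Chain' r ∧ l.getLast? = some x ∧ l.length = n}

/-- The longest `r`-chain ending at `x`. -/
noncomputable def hgt {α : Type*} (r : α → α → Prop) (x : α) : ℕ := sSup (endSet r x)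

variable {α : Type*} [Fintype α] {r : α → α → Prop}

lemma endSet_bdd (hr : ∀ v, ¬ Relation.TransGen r v v) (x : α) : BddAbove (endSet r x) := by
  refine ⟨Fintype.card α, fun n hn => ?_⟩
  obtain ⟨l, hc, -, rfl⟩ := hn
  exact (chain'_nodup hr l hc).length_le_card

lemma pathSet_bdd (hr : ∀ v, ¬ Relation.TransGen r v v) : BddAbove {n | ∃ l : List α, l.Chain' r ∧ l.length = n} := by
  refine ⟨Fintype.card α, fun n hn => ?_⟩
  obtain ⟨l, hc, rfl⟩ := hn
  exact (chain'_nodup hr l hc).length_le_card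

lemma one_mem_endSet (x : α) : 1 ∈ endSet r x := ⟨[x], List.isChain_singleton x, rfl, rfl⟩

lemma hgt_pos (hr : ∀ v, ¬ Relation.TransGen r v v) (x : α) : 1 ≤ hgt r x := le_csSup (endSet_bdd hr x) (one_mem_endSet x)

lemma hgt_step (hr : ∀ v, ¬ Relation.TransGen r v v) {x y : α} (hxy : r x y) : hgt r x + 1 ≤ hgt r y := by
  obtain ⟨l, hc, hlast, hlen⟩ := Nat.sSup_mem (s := endSet r x) ⟨1, one_mem_endSet x⟩ (endSet_bdd hr x)
  have hmem : hgt r x + 1 ∈ endSet r y := by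
    refine ⟨l ++ [y], ?_, ?_, by simp [hlen, hgt]⟩
    · show List.IsChain r (l ++ [y])
      rw [List.isChain_append]
      refine ⟨hc, List.isChain_singleton y, ?_⟩
      intro a ha b hb
      simp only [List.head?_cons, Option.mem_def, Option.some.injEq] at hb
      rw [hlast] at ha
      simp only [Option.mem_def, Option.some.injEq] at ha
      subst ha; subst hb; exact hxy
    · simp
  exact le_csSup (endSet_bdd hr y) hmem

lemma hgt_le_dirPathLen (hr : ∀ v, ¬ Relation.TransGen r v v) (x : α) : hgt r x ≤ dirPathLen r := by
  refine csSup_le_csSup (pathSet_bdd hr) ⟨1, one_mem_endSet x⟩ ?_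
  rintro n ⟨l, hc, -, rfl⟩
  exact ⟨l, hc, rfl⟩

end Aux2
section Aux3
variable {V : Type*}

lemma key_lt {N x y a b : ℕ} (hx : x < N) (hab : a < b) : a * N + x < b * N + y := by
  have h1 : (a + 1) * N = a * N + N := by ring
  have h2 : (a + 1) * N ≤ b * N := Nat.mul_le_mul_right N (by omega)
  have h3 : b * N ≤ b * N + y := Nat.le_add_right _ _
  linarith

lemma interleaved_exists (G : SimpleGraph V) [Fintype V] (k : ℕ) :
    ∃ n, ∃ c : V → Fin k → ℕ, IsInterleavedColoring G k c ∧ ∀ v a, c v a < n := by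
  cases isEmpty_or_nonempty V with
  | inl h =>
    exact ⟨1, fun v => isEmptyElim v,
      ⟨⟨fun v => isEmptyElim v, fun u => isEmptyElim u⟩, fun u => isEmptyElim u⟩,
      fun v => isEmptyElim v⟩
  | inr h =>
    set N := Fintype.card V with hN
    have hN1 : 1 ≤ N := Fintype.card_pos
    set e := Fintype.equivFin V with he
    refine ⟨k * N + 1, fun v a => a.val * N + (e v).val, ⟨⟨?_, ?_⟩, ?_⟩, ?_⟩
    · intro v a b hab
      exact key_lt (e v).isLt hab
    · intro u v huv a b hab
      have hne : (e u).val ≠ (e v).val :=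
        fun hh => G.ne_of_adj huv (e.injective (Fin.ext hh))
      have hab' : a.val * N + (e u).val = b.val * N + (e v).val := hab
      rcases lt_trichotomy a.val b.val with hc | hc | hc
      · exact absurd hab' (Nat.ne_of_lt (key_lt (e u).isLt hc))
      · rw [hc] at hab'
        exact hne (Nat.add_left_cancel hab')
      · exact absurd hab' (Nat.ne_of_gt (key_lt (e v).isLt hc))
    · intro u v huv
      have hne : (e u).val ≠ (e v).val :=
        fun hh => G.ne_of_adj huv (e.injective (Fin.ext hh))
      have hu := (e u).isLt
      have hv := (e v).isLt
      rcases lt_or_gt_of_ne hne with hc | hc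
      · left
        constructor
        · intro a
          show a.val * N + (e u).val < a.val * N + (e v).val
          omega
        · intro a ha
          show a.val * N + (e v).val < (a.val + 1) * N + (e u).val
          have h1 : (a.val + 1) * N = a.val * N + N := by ring
          linarith
      · right
        constructor
        · intro a
          show a.val * N + (e v).val < a.val * N + (e u).val
          omega
        · intro a ha
          show a.val * N + (e u).val < (a.val + 1) * N + (e v).val
          have h1 : (a.val + 1) * N = a.val * N + N := by ring
          linarith
    · intro v a
      have hv := (e v).isLt
      have ha : a.val + 1 ≤ k := a.isLt
      have h1 : (a.val + 1) * N = a.val * N + N := by ring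
      have h2 : (a.val + 1) * N ≤ k * N := Nat.mul_le_mul_right N ha
      linarith

end Aux3
/-- Helper: from the two core inequalities, conclude the real division bound. -/
lemma div_bound {L M X k : ℕ} (hk : 1 ≤ k) (h : k * L ≤ X * M) :
    (L : ℝ) / (M : ℝ) ≤ (X : ℝ) / (k : ℝ) := by
  rcases Nat.eq_zero_or_pos M with hm | hm
  · rw [hm]
    simp only [Nat.cast_zero, div_zero]
    positivity
  · rw [div_le_div_iff₀ (by exact_mod_cast hm) (by exact_mod_cast hk)]
    have : (k : ℝ) * L ≤ (X : ℝ) * M := by exact_mod_cast h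
    linarith

/-- For any acyclic orientation `ω` of a graph `G` with at least
one cycle, any simple cycle `κ` of `G`, and any `k ≥ 1`:
`χ_int^k(G)/k ≥ |κ| / min {m(κ⁺,ω'), m(κ⁻,ω')}` for an orientation `ω'`
realizing the minimum of that ratio; more precisely, for every layered acyclic
orientation `φ` of `G^k` corresponding to `ω`, the longest directed path
length `l` satisfies `l/k ≥ |κ| / min {m(κ⁺,ω), m(κ⁻,ω)}`. -/
theorem stmt13 {V : Type*} [Fintype V] (G : SimpleGraph V)
    (ω : GraphOrientation G) (hac : ω.Acyclic)
    (v : V) (κ : G.Walk v v) (hκ : κ.IsCycle) (k : ℕ) (hk : 1 ≤ k) :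
    (sInf { r : ℝ | ∃ ω' : GraphOrientation G, ω'.Acyclic ∧
        r = (κ.length : ℝ) / ((min (mFwd ω' κ) (mBwd ω' κ) : ℕ) : ℝ) } ≤
      (chiIntK G k : ℝ) / (k : ℝ)) ∧
    ∀ φ : GraphOrientation (lexProd G k), φ.Acyclic → IsLayered φ →
      (∀ (i j : V) (ℓ : Fin k), φ.dir (i, ℓ) (j, ℓ) ↔ ω.dir i j) →
      (κ.length : ℝ) / ((min (mFwd ω κ) (mBwd ω κ) : ℕ) : ℝ) ≤
        (dirPathLen φ.dir : ℝ) / (k : ℝ) := by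
  have hkR : (0 : ℝ) < (k : ℝ) := by exact_mod_cast hk
  constructor
  · -- Part 1
    have hSne : {n | ∃ c : V → Fin k → ℕ, IsInterleavedColoring G k c ∧ ∀ v a, c v a < n}.Nonempty := by
      obtain ⟨n, c, h1, h2⟩ := interleaved_exists G k
      exact ⟨n, c, h1, h2⟩
    have hmem : ∃ c : V → Fin k → ℕ, IsInterleavedColoring G k c ∧
        ∀ v a, c v a < chiIntK G k := Nat.sInf_mem hSne
    obtain ⟨c, hIC, hclt⟩ := hmem
    set n₀ := chiIntK G k with hn₀
    set Z : Fin k := ⟨0, hk⟩ with hZ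
    -- orientation induced by the coloring
    set ω' : GraphOrientation G :=
      { dir := fun u w => G.Adj u w ∧ c u Z < c w Z
        dir_iff := by
          intro u w
          constructor
          · intro h
            have hne := hIC.1.2 u w h Z Z
            rcases lt_or_gt_of_ne hne with h1 | h1
            · exact Or.inl ⟨h, h1⟩
            · exact Or.inr ⟨h.symm, h1⟩
          · rintro (⟨h, -⟩ | ⟨h, -⟩)
            · exact h
            · exact h.symm
        not_both := by
          rintro u w ⟨-, h1⟩ ⟨-, h2⟩
          omega } with hω'
    have hacω' : ω'.Acyclic := by
      intro x hx
      have h1 : Relation.TransGen (fun a b : V => c a Z < c b Z) x x :=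
        Relation.TransGen.mono (r := ω'.dir) (p := fun a b : V => c a Z < c b Z) (fun a b h => h.2) x x hx
      have ht : Transitive (fun a b : V => c a Z < c b Z) :=
        fun _ _ _ h1 h2 => lt_trans h1 h2
      rw [@Relation.transGen_eq_self _ (fun a b : V => c a Z < c b Z) ⟨fun _ _ _ h1 h2 => ht h1 h2⟩] at h1
      exact lt_irrefl _ h1
    have hAlt : ∀ u w, G.Adj u w → c u Z < c w Z → Alt k c u w := by
      intro u w h hlt0
      rcases hIC.2 u w h with h' | h'
      · exact h'
      · have := h'.1 Z; omega
    have hF : ∀ u w, G.Adj u w → ω'.dir u w → ∀ a : Fin k, c u a + 1 ≤ c w a := by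
      intro u w h hd a
      exact (hAlt u w h hd.2).1 a
    have hB : ∀ u w, G.Adj u w → ω'.dir w u → ∀ (a : ℕ) (h : a + 1 < k),
        c u ⟨a, by omega⟩ + 1 ≤ c w ⟨a + 1, h⟩ := by
      intro u w h hd a ha
      exact (hAlt w u h.symm hd.2).2 ⟨a, by omega⟩ ha
    have h1 := core_ineq ω' κ hk c n₀ hclt hF hB
    have h2 := core_ineq ω' κ.reverse hk c n₀ hclt hF hB
    rw [Walk.length_reverse, mBwd_reverse] at h2
    have hmin : k * κ.length ≤ n₀ * min (mFwd ω' κ) (mBwd ω' κ) := by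
      rcases le_total (mFwd ω' κ) (mBwd ω' κ) with h | h
      · rw [min_eq_left h]; exact h2
      · rw [min_eq_right h]; exact h1
    have hbdd : BddBelow { r : ℝ | ∃ ω'' : GraphOrientation G, ω''.Acyclic ∧
        r = (κ.length : ℝ) / ((min (mFwd ω'' κ) (mBwd ω'' κ) : ℕ) : ℝ) } := by
      refine ⟨0, ?_⟩
      rintro r ⟨ω'', -, rfl⟩
      positivity
    have hmemS : (κ.length : ℝ) / ((min (mFwd ω' κ) (mBwd ω' κ) : ℕ) : ℝ) ∈
        { r : ℝ | ∃ ω'' : GraphOrientation G, ω''.Acyclic ∧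
          r = (κ.length : ℝ) / ((min (mFwd ω'' κ) (mBwd ω'' κ) : ℕ) : ℝ) } :=
      ⟨ω', hacω', rfl⟩
    exact le_trans (csInf_le hbdd hmemS) (div_bound hk hmin)
  · -- Part 2
    intro φ hacφ hlay hiff
    have hg1 : ∀ x, 1 ≤ hgt φ.dir x := hgt_pos hacφ
    have hgl : ∀ x, hgt φ.dir x ≤ dirPathLen φ.dir := hgt_le_dirPathLen hacφ
    set val : V → Fin k → ℕ :=
      fun i a => hgt φ.dir (i, ⟨k - 1 - a.val, by omega⟩) - 1 with hval
    have hlt : ∀ u a, val u a < dirPathLen φ.dir := by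
      intro u a
      have := hg1 (u, ⟨k - 1 - a.val, by omega⟩)
      have := hgl (u, ⟨k - 1 - a.val, by omega⟩)
      simp only [hval]
      omega
    have hF : ∀ u w, G.Adj u w → ω.dir u w → ∀ a : Fin k, val u a + 1 ≤ val w a := by
      intro u w h hd a
      set ℓ : Fin k := ⟨k - 1 - a.val, by omega⟩
      have hdir : φ.dir (u, ℓ) (w, ℓ) := (hiff u w ℓ).mpr hd
      have hstep := hgt_step hacφ hdir
      have := hg1 (u, ℓ)
      have hgw := hg1 (w, ℓ)
      show hgt φ.dir (u, ℓ) - 1 + 1 ≤ hgt φ.dir (w, ℓ) - 1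
      omega
    have hB : ∀ u w, G.Adj u w → ω.dir w u → ∀ (a : ℕ) (h : a + 1 < k),
        val u ⟨a, by omega⟩ + 1 ≤ val w ⟨a + 1, h⟩ := by
      intro u w h hd a ha
      set ℓu : Fin k := ⟨k - 1 - a, by omega⟩
      set ℓw : Fin k := ⟨k - 1 - (a + 1), by omega⟩
      have hadj2 : (lexProd G k).Adj (u, ℓu) (w, ℓw) := Or.inl h
      have hlt2 : ((w, ℓw) : V × Fin k).2 < ((u, ℓu) : V × Fin k).2 := by
        simp only [Fin.lt_def]
        show k - 1 - (a + 1) < k - 1 - a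
        omega
      have hdir := hlay.1 _ _ hadj2 hlt2
      have hstep := hgt_step hacφ hdir
      have := hg1 (u, ℓu)
      have hgw := hg1 (w, ℓw)
      show hgt φ.dir (u, ℓu) - 1 + 1 ≤ hgt φ.dir (w, ℓw) - 1
      omega
    have h1 := core_ineq ω κ hk val (dirPathLen φ.dir) hlt hF hB
    have h2 := core_ineq ω κ.reverse hk val (dirPathLen φ.dir) hlt hF hB
    rw [Walk.length_reverse, mBwd_reverse] at h2
    have hmin : k * κ.length ≤ dirPathLen φ.dir * min (mFwd ω κ) (mBwd ω κ) := by
      rcases le_total (mFwd ω κ) (mBwd ω κ) with h | h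
      · rw [min_eq_left h]; exact h2
      · rw [min_eq_right h]; exact h1
    exact div_bound hk hmin
end
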